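/- Let A_1, …, A_m and B_1, …, B_m be finite sets such that A_i ∩ B_j = ∅ if and only if i = j. Then the sum over i = 1, …, m of 1 / C(|A_i| + |B_i|, |A_i|) is at most 1, where C(a, b) denotes the binomial coefficient. -/

import Mathlib

open Finset

lemma choose_ratio (a b : ℕ) :
    ((a : ℚ) + 1) * (1 / ((a + b).choose a)) =
      ((a : ℚ) + 1 + b) * (1 / ((a + b + 1).choose (a + 1))) := by
  have h := Nat.add_one_mul_choose_eq (a + b) a
  have h1 : 0 < (a + b).choose a := Nat.choose_pos (Nat.le_add_right _ _)
  have h2 : 0 < (a + b + 1).choose (a + 1) := Nat.choose_pos (by omega)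
  have key : (a + 1) * ((a + b + 1).choose (a + 1)) = (a + 1 + b) * ((a + b).choose a) := by
    rw [show a + 1 + b = a + b + 1 by omega]
    rw [mul_comm ((a + b + 1).choose (a + 1))] at h
    rw [← h]
  have h1' : ((a + b).choose a : ℚ) ≠ 0 := by positivity
  have h2' : ((a + b + 1).choose (a + 1) : ℚ) ≠ 0 := by positivity
  field_simp
  exact_mod_cast key.trans (mul_comm _ _)

lemma bollobas_singleton {α : Type*} [DecidableEq α] {ι : Type*} [DecidableEq ι]
    (B : ι → Finset α) (I : Finset ι) (A : ι → Finset α)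
    (h : ∀ i ∈ I, ∀ j ∈ I, (A i ∩ B j = ∅ ↔ i = j))
    {i : ι} (hi : i ∈ I) (hAi : A i = ∅) :
    ∑ j ∈ I, (1 : ℚ) / (((A j).card + (B j).card).choose (A j).card) ≤ 1 := by
  have hIs : I = {i} := by
    ext j
    simp only [mem_singleton]
    constructor
    · intro hj
      exact ((h i hi j hj).mp (by simp [hAi])).symm
    · rintro rfl; exact hi
  rw [hIs]
  simp [hAi]

lemma bollobas_aux {α : Type*} [DecidableEq α] {ι : Type*} [DecidableEq ι]
    (B : ι → Finset α) (n : ℕ) :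
    ∀ (I : Finset ι) (A : ι → Finset α),
      (I.biUnion fun i => A i ∪ B i).card ≤ n →
      (∀ i ∈ I, ∀ j ∈ I, (A i ∩ B j = ∅ ↔ i = j)) →
      ∑ i ∈ I, (1 : ℚ) / (((A i).card + (B i).card).choose (A i).card) ≤ 1 := by
  induction n with
  | zero =>
    intro I A hX h
    rcases I.eq_empty_or_nonempty with rfl | ⟨i0, hi0⟩
    · simp
    · have hXe : (I.biUnion fun i => A i ∪ B i) = ∅ := card_eq_zero.mp (Nat.le_zero.mp hX)
      have hA0 : A i0 = ∅ := by
        have hs : A i0 ⊆ I.biUnion fun i => A i ∪ B i := fun x hx =>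
          mem_biUnion.mpr ⟨i0, hi0, mem_union_left _ hx⟩
        rw [hXe] at hs
        exact subset_empty.mp hs
      exact bollobas_singleton B I A h hi0 hA0
  | succ n ih =>
    intro I A hX h
    rcases I.eq_empty_or_nonempty with rfl | ⟨i0, hi0⟩
    · simp
    by_cases hA0 : ∃ i ∈ I, A i = ∅
    · obtain ⟨i, hi, hAi⟩ := hA0
      exact bollobas_singleton B I A h hi hAi
    push_neg at hA0
    set X := I.biUnion fun i => A i ∪ B i with hXdef
    have hsub : ∀ i ∈ I, A i ∪ B i ⊆ X := fun i hi x hx => mem_biUnion.mpr ⟨i, hi, hx⟩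
    have hABdisj : ∀ i ∈ I, A i ∩ B i = ∅ := fun i hi => (h i hi i hi).mpr rfl
    have hXne : X.Nonempty := by
      obtain ⟨x, hx⟩ := hA0 i0 hi0
      exact ⟨x, hsub i0 hi0 (mem_union_left _ hx)⟩
    have hNpos : 0 < (X.card : ℚ) := by
      exact_mod_cast card_pos.mpr hXne
    -- per-x application of the inductive hypothesis
    have hx1 : ∀ x ∈ X, ∑ i ∈ I.filter (fun i => x ∉ B i),
        (1 : ℚ) / (((A i \ {x}).card + (B i).card).choose ((A i \ {x}).card)) ≤ 1 := by
      intro x hx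
      apply ih
      · have hss : ((I.filter fun i => x ∉ B i).biUnion fun i => (A i \ {x}) ∪ B i)
            ⊆ X.erase x := by
          intro y hy
          obtain ⟨i, hi, hyi⟩ := mem_biUnion.mp hy
          obtain ⟨hiI, hxB⟩ := mem_filter.mp hi
          rcases mem_union.mp hyi with hyA | hyB
          · obtain ⟨hyA', hyx⟩ := mem_sdiff.mp hyA
            exact mem_erase.mpr ⟨by simpa using hyx, hsub i hiI (mem_union_left _ hyA')⟩
          · refine mem_erase.mpr ⟨fun hyx => hxB (hyx ▸ hyB), hsub i hiI (mem_union_right _ hyB)⟩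
        calc ((I.filter fun i => x ∉ B i).biUnion fun i => (A i \ {x}) ∪ B i).card
            ≤ (X.erase x).card := card_le_card hss
          _ = X.card - 1 := card_erase_of_mem hx
          _ ≤ n := by omega
      · intro i hi j hj
        obtain ⟨hiI, hxBi⟩ := mem_filter.mp hi
        obtain ⟨hjI, hxBj⟩ := mem_filter.mp hj
        constructor
        · intro he
          by_contra hne
          have hne' : A i ∩ B j ≠ ∅ := fun hc => hne ((h i hiI j hjI).mp hc)
          obtain ⟨y, hy⟩ := nonempty_iff_ne_empty.mpr hne'
          obtain ⟨hyA, hyB⟩ := mem_inter.mp hy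
          have hyx : y ≠ x := fun e => hxBj (e ▸ hyB)
          have : y ∈ (A i \ {x}) ∩ B j :=
            mem_inter.mpr ⟨mem_sdiff.mpr ⟨hyA, by simpa using hyx⟩, hyB⟩
          rw [he] at this
          exact notMem_empty y this
        · rintro rfl
          apply subset_empty.mp
          rw [← hABdisj i hiI]
          exact inter_subset_inter (sdiff_subset) le_rfl
    -- per-i evaluation of the inner sum
    have hx2 : ∀ i ∈ I, ∑ x ∈ X.filter (fun x => x ∉ B i),
        (1 : ℚ) / (((A i \ {x}).card + (B i).card).choose ((A i \ {x}).card))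
        = (X.card : ℚ) * ((1 : ℚ) / (((A i).card + (B i).card).choose (A i).card)) := by
      intro i hi
      have hsplit : X.filter (fun x => x ∉ B i)
          = A i ∪ X.filter (fun x => x ∉ A i ∧ x ∉ B i) := by
        ext y
        simp only [mem_filter, mem_union]
        constructor
        · rintro ⟨hyX, hyB⟩
          by_cases hyA : y ∈ A i
          · exact Or.inl hyA
          · exact Or.inr ⟨hyX, hyA, hyB⟩
        · rintro (hyA | ⟨hyX, hyA, hyB⟩)
          · refine ⟨hsub i hi (mem_union_left _ hyA), fun hyB => ?_⟩
            have : y ∈ A i ∩ B i := mem_inter.mpr ⟨hyA, hyB⟩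
            rw [hABdisj i hi] at this
            exact notMem_empty y this
          · exact ⟨hyX, hyB⟩
      have hdisj : Disjoint (A i) (X.filter (fun x => x ∉ A i ∧ x ∉ B i)) := by
        refine disjoint_left.mpr fun y hyA hyF => ?_
        exact ((mem_filter.mp hyF).2.1) hyA
      rw [hsplit, sum_union hdisj]
      obtain ⟨a', ha'⟩ : ∃ a', (A i).card = a' + 1 := by
        have : (A i).Nonempty := hA0 i hi
        exact ⟨(A i).card - 1, by have := card_pos.mpr this; omega⟩
      have h1 : ∑ x ∈ A i,
          (1 : ℚ) / (((A i \ {x}).card + (B i).card).choose ((A i \ {x}).card))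
          = ((A i).card : ℚ) * ((1 : ℚ) / ((a' + (B i).card).choose a')) := by
        rw [sum_congr rfl (fun x hx => ?_), sum_const, nsmul_eq_mul]
        have : A i \ {x} = (A i).erase x := by
          rw [Finset.sdiff_singleton_eq_erase]
        rw [this, card_erase_of_mem hx, ha']
        simp
      have h2 : ∑ x ∈ X.filter (fun x => x ∉ A i ∧ x ∉ B i),
          (1 : ℚ) / (((A i \ {x}).card + (B i).card).choose ((A i \ {x}).card))
          = ((X.card : ℚ) - (A i).card - (B i).card)
            * ((1 : ℚ) / (((A i).card + (B i).card).choose (A i).card)) := by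
        rw [sum_congr rfl (fun x hx => ?_), sum_const, nsmul_eq_mul]
        · congr 1
          have hfe : X.filter (fun x => x ∉ A i ∧ x ∉ B i) = X \ (A i ∪ B i) := by
            ext y
            simp only [mem_filter, mem_sdiff, mem_union]
            tauto
          rw [hfe, card_sdiff_of_subset (hsub i hi), card_union_of_disjoint
            (disjoint_iff_inter_eq_empty.mpr (hABdisj i hi))]
          have hle : (A i).card + (B i).card ≤ X.card := by
            calc (A i).card + (B i).card = (A i ∪ B i).card :=
                (card_union_of_disjoint (disjoint_iff_inter_eq_empty.mpr (hABdisj i hi))).symm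
              _ ≤ X.card := card_le_card (hsub i hi)
          push_cast [Nat.cast_sub hle]
          ring
        · have hxA : x ∉ A i := (mem_filter.mp hx).2.1
          rw [Finset.sdiff_singleton_eq_erase, erase_eq_of_notMem hxA]
      rw [h1, h2, ha', show a' + 1 + (B i).card = a' + (B i).card + 1 from by omega]
      have := choose_ratio a' (B i).card
      push_cast
      linarith [this]
    -- put it together
    rw [← mul_le_mul_iff_right₀ hNpos]
    calc (X.card : ℚ) * ∑ i ∈ I, (1 : ℚ) / (((A i).card + (B i).card).choose (A i).card)
        = ∑ i ∈ I, (X.card : ℚ) * ((1 : ℚ) / (((A i).card + (B i).card).choose (A i).card)) := by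
          rw [mul_sum]
      _ = ∑ i ∈ I, ∑ x ∈ X.filter (fun x => x ∉ B i),
            (1 : ℚ) / (((A i \ {x}).card + (B i).card).choose ((A i \ {x}).card)) :=
          (sum_congr rfl fun i hi => (hx2 i hi).symm)
      _ = ∑ x ∈ X, ∑ i ∈ I.filter (fun i => x ∉ B i),
            (1 : ℚ) / (((A i \ {x}).card + (B i).card).choose ((A i \ {x}).card)) := by
          refine sum_comm' fun i x => ?_
          simp only [mem_filter]
          tauto
      _ ≤ ∑ x ∈ X, 1 := sum_le_sum hx1
      _ = (X.card : ℚ) * 1 := by simp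

theorem bollobas_inequality {α : Type*} [DecidableEq α] (m : ℕ)
    (A B : Fin m → Finset α)
    (h : ∀ i j, A i ∩ B j = ∅ ↔ i = j) :
    ∑ i, (1 : ℚ) / (((A i).card + (B i).card).choose (A i).card) ≤ 1 := by
  exact bollobas_aux B (Finset.univ.biUnion fun i => A i ∪ B i).card Finset.univ A le_rfl
    (fun i _ j _ => h i j)
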